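/- (Per-step descent inequality) Let F : ℝ^d → ℝ be differentiable with L-Lipschitz gradient (L > 0). Let θ, m, G, δ ∈ ℝ^d with m = G + δ and ‖G - ∇F(θ)‖² ≤ ε for some ε ≥ 0. Let H be a diagonal d×d matrix with diagonal entries in [h_min, h_max], 0 < h_min ≤ h_max, and let η̃ > 0 satisfy η̃ ≤ h_min²/(4 L h_max). Set θ⁺ = θ - η̃ H^{-1} m. Then there exists a constant c₂ > 0 depending only on L, h_min, and h_max such that F(θ⁺) ≤ F(θ) - (η̃/(4 h_max)) ‖∇F(θ)‖² + c₂ · η̃ · (‖δ‖² + ε). -/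

import Mathlib

open scoped RealInnerProductSpace

lemma descent_lemma {d : ℕ} (L : ℝ) (F : EuclideanSpace ℝ (Fin d) → ℝ)
    (hF : Differentiable ℝ F)
    (hL : 0 ≤ L) (hlip : ∀ x y, ‖gradient F x - gradient F y‖ ≤ L * ‖x - y‖)
    (x y : EuclideanSpace ℝ (Fin d)) :
    F y ≤ F x + ⟪gradient F x, y - x⟫ + L * ‖y - x‖ ^ 2 := by
  have hfd : ∀ z, fderiv ℝ F z = InnerProductSpace.toDual ℝ _ (gradient F z) := by
    intro z
    rw [gradient, LinearIsometryEquiv.apply_symm_apply]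
  have key : ‖F y - F x - (fderiv ℝ F x) (y - x)‖ ≤ (L * ‖y - x‖) * ‖y - x‖ := by
    apply Convex.norm_image_sub_le_of_norm_hasFDerivWithin_le'
      (f' := fun z => fderiv ℝ F z)
      (fun z _ => (hF z).hasFDerivAt.hasFDerivWithinAt)
      ?_ (convex_segment x y) (left_mem_segment ℝ x y) (right_mem_segment ℝ x y)
    intro z hz
    have h1 : ‖fderiv ℝ F z - fderiv ℝ F x‖ = ‖gradient F z - gradient F x‖ := by
      rw [hfd z, hfd x, ← map_sub, LinearIsometryEquiv.norm_map]
    rw [h1]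
    refine (hlip z x).trans ?_
    have : ‖z - x‖ ≤ ‖y - x‖ := by
      obtain ⟨a, b, ha, hb, hab, rfl⟩ := hz
      have hae : a = 1 - b := by linarith
      subst hae
      have : (1 - b) • x + b • y - x = b • (y - x) := by module
      rw [this, norm_smul]
      have hb1 : b ≤ 1 := by linarith
      simpa [abs_of_nonneg hb] using
        mul_le_of_le_one_left (norm_nonneg (y - x)) hb1
    exact mul_le_mul_of_nonneg_left this hL
  have h2 : (fderiv ℝ F x) (y - x) = ⟪gradient F x, y - x⟫ := by
    rw [hfd x, InnerProductSpace.toDual_apply_apply]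
  have := (abs_le.mp (by rwa [Real.norm_eq_abs] at key)).2
  nlinarith [this]

lemma esq {d : ℕ} (x : EuclideanSpace ℝ (Fin d)) : ‖x‖ ^ 2 = ∑ i, x i ^ 2 := by
  rw [EuclideanSpace.norm_eq, Real.sq_sqrt (by positivity)]
  simp [Real.norm_eq_abs, sq_abs]

set_option maxHeartbeats 1000000 in
lemma pointwise_ineq (L hmin hmax ηt h a b : ℝ) (hL : 0 < L) (hhmin : 0 < hmin)
    (hhm : hmin ≤ hmax) (h1 : hmin ≤ h) (h2 : h ≤ hmax) (hηt : 0 < ηt)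
    (hle : ηt ≤ hmin ^ 2 / (4 * L * hmax)) :
    a * -(ηt * h⁻¹ * (a + b)) + L * (ηt * h⁻¹ * (a + b)) ^ 2 ≤
      -(ηt / (4 * hmax)) * a ^ 2 + (hmax / hmin ^ 2 + 1 / (2 * hmax)) * ηt * b ^ 2 := by
  have hhmax : 0 < hmax := lt_of_lt_of_le hhmin hhm
  have hh0 : 0 < h := lt_of_lt_of_le hhmin h1
  have hk1 : h⁻¹ ≤ hmin⁻¹ := by gcongr
  have hk2 : hmax⁻¹ ≤ h⁻¹ := by gcongr
  have hk0 : 0 < h⁻¹ := inv_pos.mpr hh0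
  have hLe : L * ηt ≤ hmin ^ 2 / (4 * hmax) := by
    have := mul_le_mul_of_nonneg_left hle hL.le
    have heq : L * (hmin ^ 2 / (4 * L * hmax)) = hmin ^ 2 / (4 * hmax) := by
      field_simp
    linarith [heq ▸ this]
  have stepA : -(ηt * h⁻¹) * a ^ 2 ≤ -(ηt / hmax) * a ^ 2 := by
    have : ηt * hmax⁻¹ ≤ ηt * h⁻¹ := by gcongr
    rw [div_eq_mul_inv]
    nlinarith [sq_nonneg a]
  have young : |a * b| ≤ hmin / (4 * hmax) * a ^ 2 + hmax / hmin * b ^ 2 := by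
    have h7 : 4 * hmax * hmin * |a * b| ≤ hmin ^ 2 * a ^ 2 + 4 * hmax ^ 2 * b ^ 2 := by
      have e : hmin ^ 2 * a ^ 2 + 4 * hmax ^ 2 * b ^ 2 - 4 * hmax * hmin * |a * b|
          = (hmin * |a| - 2 * hmax * |b|) ^ 2 := by
        rw [abs_mul]
        linear_combination (-hmin ^ 2) * (sq_abs a) + (-4 * hmax ^ 2) * (sq_abs b)
      linarith [sq_nonneg (hmin * |a| - 2 * hmax * |b|)]
    rw [← sub_nonneg]
    have h8 : hmin / (4 * hmax) * a ^ 2 + hmax / hmin * b ^ 2 - |a * b|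
        = (hmin ^ 2 * a ^ 2 + 4 * hmax ^ 2 * b ^ 2 - 4 * hmax * hmin * |a * b|)
          / (4 * hmax * hmin) := by
      field_simp
    rw [h8]
    exact div_nonneg (by linarith) (by positivity)
  have stepB : -(ηt * h⁻¹) * (a * b) ≤ ηt * (a ^ 2 / (4 * hmax) + hmax / hmin ^ 2 * b ^ 2) := by
    have h3 : -(h⁻¹ * (a * b)) ≤ hmin⁻¹ * |a * b| := by
      have := neg_abs_le (h⁻¹ * (a * b))
      have habs : |h⁻¹ * (a * b)| = h⁻¹ * |a * b| := by
        rw [abs_mul, abs_of_pos hk0]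
      nlinarith [abs_nonneg (a * b)]
    have h4 : hmin⁻¹ * |a * b| ≤ hmin⁻¹ * (hmin / (4 * hmax) * a ^ 2 + hmax / hmin * b ^ 2) := by
      gcongr
    have h5 : hmin⁻¹ * (hmin / (4 * hmax) * a ^ 2 + hmax / hmin * b ^ 2)
        = a ^ 2 / (4 * hmax) + hmax / hmin ^ 2 * b ^ 2 := by
      field_simp
    have h6 : -(ηt * h⁻¹) * (a * b) = ηt * -(h⁻¹ * (a * b)) := by ring
    rw [h6]
    have := h5 ▸ (h3.trans h4)
    exact mul_le_mul_of_nonneg_left this hηt.le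
  have stepC : L * (ηt * h⁻¹ * (a + b)) ^ 2 ≤ ηt / (4 * hmax) * (2 * a ^ 2 + 2 * b ^ 2) := by
    have e1 : L * (ηt * h⁻¹ * (a + b)) ^ 2 = (L * ηt) * (ηt * (h⁻¹ ^ 2 * (a + b) ^ 2)) := by
      ring
    have e2 : h⁻¹ ^ 2 ≤ (hmin ^ 2)⁻¹ := by
      rw [← inv_pow]; gcongr
    have e3 : ηt * (h⁻¹ ^ 2 * (a + b) ^ 2) ≤ ηt * ((hmin ^ 2)⁻¹ * (a + b) ^ 2) := by
      gcongr
    have e4 : (L * ηt) * (ηt * (h⁻¹ ^ 2 * (a + b) ^ 2)) ≤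
        (hmin ^ 2 / (4 * hmax)) * (ηt * ((hmin ^ 2)⁻¹ * (a + b) ^ 2)) := by
      apply mul_le_mul hLe e3 (by positivity) (by positivity)
    have e5 : (hmin ^ 2 / (4 * hmax)) * (ηt * ((hmin ^ 2)⁻¹ * (a + b) ^ 2))
        = ηt / (4 * hmax) * (a + b) ^ 2 := by
      field_simp
    have e6 : ηt / (4 * hmax) * (a + b) ^ 2 ≤ ηt / (4 * hmax) * (2 * a ^ 2 + 2 * b ^ 2) := by
      have : (a + b) ^ 2 ≤ 2 * a ^ 2 + 2 * b ^ 2 := by nlinarith [sq_nonneg (a - b)]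
      gcongr
    calc L * (ηt * h⁻¹ * (a + b)) ^ 2 = (L * ηt) * (ηt * (h⁻¹ ^ 2 * (a + b) ^ 2)) := e1
      _ ≤ ηt / (4 * hmax) * (a + b) ^ 2 := e5 ▸ e4
      _ ≤ _ := e6
  have expand : a * -(ηt * h⁻¹ * (a + b)) = -(ηt * h⁻¹) * a ^ 2 + -(ηt * h⁻¹) * (a * b) := by
    ring
  rw [expand]
  have goal : -(ηt / hmax) * a ^ 2 + ηt * (a ^ 2 / (4 * hmax) + hmax / hmin ^ 2 * b ^ 2)
      + ηt / (4 * hmax) * (2 * a ^ 2 + 2 * b ^ 2)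
      = -(ηt / (4 * hmax)) * a ^ 2 + (hmax / hmin ^ 2 + 1 / (2 * hmax)) * ηt * b ^ 2 := by
    field_simp; ring
  linarith [stepA, stepB, stepC]

/-- Per-step descent inequality: for `F` differentiable with `L`-Lipschitz
gradient, a preconditioned momentum step `θ⁺_i = θ_i - η̃ (H_i)⁻¹ m_i` with
`m = G + δ`, `‖G - ∇F(θ)‖² ≤ ε`, diagonal entries `H_i ∈ [h_min, h_max]`, and
`η̃ ≤ h_min²/(4 L h_max)`, satisfies
`F(θ⁺) ≤ F(θ) - (η̃/(4 h_max)) ‖∇F(θ)‖² + c₂ η̃ (‖δ‖² + ε)` for some constant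
`c₂ > 0` depending only on `L, h_min, h_max`. -/
theorem per_step_descent
    (L hmin hmax : ℝ) (hL : 0 < L) (hhmin : 0 < hmin) (hhm : hmin ≤ hmax) :
    ∃ c₂ > (0 : ℝ),
      ∀ (d : ℕ) (F : EuclideanSpace ℝ (Fin d) → ℝ)
        (θ θplus m G δ : EuclideanSpace ℝ (Fin d))
        (H : Fin d → ℝ) (ε ηt : ℝ),
        Differentiable ℝ F →
        (∀ x y : EuclideanSpace ℝ (Fin d),
          ‖gradient F x - gradient F y‖ ≤ L * ‖x - y‖) →
        m = G + δ →
        0 ≤ ε →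
        ‖G - gradient F θ‖ ^ 2 ≤ ε →
        (∀ i : Fin d, H i ∈ Set.Icc hmin hmax) →
        0 < ηt →
        ηt ≤ hmin ^ 2 / (4 * L * hmax) →
        (∀ i : Fin d, θplus i = θ i - ηt * (H i)⁻¹ * m i) →
        F θplus ≤ F θ - (ηt / (4 * hmax)) * ‖gradient F θ‖ ^ 2 +
          c₂ * ηt * (‖δ‖ ^ 2 + ε) := by
  have hhmax : 0 < hmax := lt_of_lt_of_le hhmin hhm
  refine ⟨2 * (hmax / hmin ^ 2 + 1 / (2 * hmax)), by positivity, ?_⟩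
  intro d F θ θplus m G δ H ε ηt hF hlip hm hε hG hH hηt hηle hstep
  set C : ℝ := hmax / hmin ^ 2 + 1 / (2 * hmax) with hC
  set g : EuclideanSpace ℝ (Fin d) := gradient F θ with hg
  set e : EuclideanSpace ℝ (Fin d) := G - g + δ with he
  have hme : ∀ i, m i = g i + e i := by
    intro i
    rw [hm]
    simp [he, PiLp.add_apply, PiLp.sub_apply]
    ring
  have key := descent_lemma L F hF hL.le hlip θ θplus
  rw [← hg] at key
  have hinner : (inner ℝ g (θplus - θ) : ℝ) = ∑ i, g i * (θplus - θ) i := by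
    simp [PiLp.inner_apply, RCLike.inner_apply, conj_trivial, mul_comm]
  have hw : ∀ i, (θplus - θ) i = -(ηt * (H i)⁻¹ * (g i + e i)) := by
    intro i
    rw [PiLp.sub_apply, hstep i, hme i]
    ring
  have hsum : (inner ℝ g (θplus - θ) : ℝ) + L * ‖θplus - θ‖ ^ 2 ≤
      -(ηt / (4 * hmax)) * ‖g‖ ^ 2 + C * ηt * ‖e‖ ^ 2 := by
    rw [hinner, esq (θplus - θ), esq g, esq e, Finset.mul_sum, Finset.mul_sum,
      Finset.mul_sum, ← Finset.sum_add_distrib, ← Finset.sum_add_distrib]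
    apply Finset.sum_le_sum
    intro i _
    rw [hw i]
    simpa only [neg_sq, hC] using pointwise_ineq L hmin hmax ηt (H i) (g i) (e i) hL hhmin hhm
      (hH i).1 (hH i).2 hηt hηle
  have hesq : ‖e‖ ^ 2 ≤ 2 * (‖δ‖ ^ 2 + ε) := by
    have h1 : ‖e‖ ≤ ‖G - g‖ + ‖δ‖ := norm_add_le _ _
    have h2 : ‖e‖ ^ 2 ≤ (‖G - g‖ + ‖δ‖) ^ 2 := pow_le_pow_left₀ (norm_nonneg e) h1 2
    nlinarith [sq_nonneg (‖G - g‖ - ‖δ‖), hG]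
  have hCpos : 0 < C := by positivity
  have : C * ηt * ‖e‖ ^ 2 ≤ C * ηt * (2 * (‖δ‖ ^ 2 + ε)) := by
    gcongr
  rw [hinner] at key hsum
  have hfinal : (∑ i, g i * (θplus - θ) i) + L * ‖θplus - θ‖ ^ 2 ≤
      -(ηt / (4 * hmax)) * ‖g‖ ^ 2 + C * ηt * (2 * (‖δ‖ ^ 2 + ε)) :=
    hsum.trans (add_le_add_right this _)
  calc F θplus ≤ F θ + ((∑ i, g i * (θplus - θ) i) + L * ‖θplus - θ‖ ^ 2) := by
        rw [← add_assoc]; exact key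
    _ ≤ F θ + (-(ηt / (4 * hmax)) * ‖g‖ ^ 2 + C * ηt * (2 * (‖δ‖ ^ 2 + ε))) :=
        add_le_add_right hfinal _
    _ = F θ - (ηt / (4 * hmax)) * ‖g‖ ^ 2 + 2 * C * ηt * (‖δ‖ ^ 2 + ε) := by ring
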